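/- Fix integers k ≥ U ≥ 1 and define the sequence n : ℕ → ℕ by n(0) = 1 and, for i ≥ 1: n(i) = ∑_{j=0}^{i−1} n(j) if i ≤ U; n(i) = ∑_{j=1}^{i−1} n(j) if U < i ≤ k; and n(i) = ∑_{j=i−k}^{i−1} n(j) if i > k. Then n(i) = ∑_{j=1}^{U} F_k(i−j+1) = F_k(i) + F_k(i−1) + ⋯ + F_k(i−U+1) for every i ≥ 1. (Here n(i) is the number of new nodes that complete the download of a chunk exactly i time units after its generation at the source, in the multiple unbalanced-tree chunk distribution.) -/

import Mathlib

/-- Value of the k-step Fibonacci sequence at natural indices. -/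
def FkNat (k : ℕ) : ℕ → ℕ
  | 0 => 0
  | 1 => 1
  | n + 2 => ∑ j ∈ Finset.range k, FkNat k (n + 1 - j)
decreasing_by omega

/-- The k-step Fibonacci sequence `F_k : ℤ → ℕ`:
`F_k i = 0` for `i ≤ 0`, `F_k 1 = 1`, and `F_k i = ∑_{j=1}^{k} F_k (i - j)` for `i > 1`. -/
def Fk (k : ℕ) (i : ℤ) : ℕ := if i ≤ 0 then 0 else FkNat k i.toNat

/-- The k-step Fibonacci sum `S_k n = ∑_{i=1}^{n} F_k i` (zero for `n ≤ 0`). -/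
noncomputable def Sk (k : ℕ) (n : ℤ) : ℕ := ∑ i ∈ Finset.Icc (1 : ℤ) n, Fk k i

lemma Fk_nonpos (k : ℕ) {i : ℤ} (h : i ≤ 0) : Fk k i = 0 := if_pos h

lemma Fk_one (k : ℕ) : Fk k 1 = 1 := by simp [Fk, FkNat]

lemma Sk_nonpos (k : ℕ) {n : ℤ} (h : n ≤ 0) : Sk k n = 0 := by
  unfold Sk
  rw [Finset.Icc_eq_empty (by omega)]
  simp

lemma sum_Icc_Fk (k : ℕ) {a b : ℤ} (ha : a ≤ 1) :
    ∑ t ∈ Finset.Icc a b, Fk k t = Sk k b := by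
  unfold Sk
  refine (Finset.sum_subset ?_ ?_).symm
  · intro x hx; simp only [Finset.mem_Icc] at *; omega
  · intro x hx hxn
    simp only [Finset.mem_Icc] at hx hxn
    exact Fk_nonpos k (by omega)

lemma sum_shift (k : ℕ) (c : ℤ) (a b : ℕ) :
    ∑ j' ∈ Finset.Ico a b, Fk k ((j' : ℤ) - c + 1)
      = ∑ t ∈ Finset.Icc ((a:ℤ) - c + 1) ((b:ℤ) - c), Fk k t := by
  refine Finset.sum_nbij' (fun j' => (j':ℤ) - c + 1) (fun t => (t + c - 1).toNat) ?_ ?_ ?_ ?_ ?_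
  · intro x hx; simp only [Finset.mem_Ico, Finset.mem_Icc] at *; omega
  · intro t ht; simp only [Finset.mem_Ico, Finset.mem_Icc] at *; omega
  · intro x hx; simp only [Finset.mem_Ico] at hx; omega
  · intro t ht; simp only [Finset.mem_Icc] at ht; omega
  · intro x hx; rfl

lemma Fk_rec (k : ℕ) {n : ℤ} (h : 2 ≤ n) :
    Fk k n = ∑ t ∈ Finset.Icc (n - k) (n - 1), Fk k t := by
  have h1 : ∑ t ∈ Finset.Icc (n - k) (n - 1), Fk k t
      = ∑ j ∈ Finset.range k, Fk k (n - 1 - j) := by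
    refine (Finset.sum_nbij' (fun j : ℕ => n - 1 - (j:ℤ)) (fun t => (n - 1 - t).toNat)
      ?_ ?_ ?_ ?_ ?_).symm
    · intro x hx; simp only [Finset.mem_range, Finset.mem_Icc] at *; omega
    · intro t ht; simp only [Finset.mem_range, Finset.mem_Icc] at *; omega
    · intro x hx; simp only [Finset.mem_range] at hx; omega
    · intro t ht; simp only [Finset.mem_Icc] at ht; omega
    · intro x hx; rfl
  rw [h1]
  obtain ⟨p, hp⟩ : ∃ p : ℕ, n = (p : ℤ) + 2 := ⟨(n-2).toNat, by omega⟩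
  subst hp
  have h2 : Fk k ((p:ℤ)+2) = FkNat k (p+2) := by
    have ht : ((p:ℤ)+2).toNat = p+2 := by omega
    unfold Fk; rw [if_neg (by omega), ht]
  rw [h2, FkNat]
  apply Finset.sum_congr rfl
  intro j hj
  unfold Fk
  by_cases hjp : j ≤ p
  · rw [if_neg (by omega)]
    congr 1; omega
  · rw [if_pos (by omega)]
    have h3 : p + 1 - j = 0 := by omega
    rw [h3]
    simp [FkNat]

/-- In the multiple unbalanced-tree chunk distribution with `k ≥ U`, the number `n i`
of new nodes completing the download of a chunk exactly `i` time units after its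
generation (`n 0 = 1`, `n i = ∑_{j=0}^{i-1} n j` for `1 ≤ i ≤ U`,
`n i = ∑_{j=1}^{i-1} n j` for `U < i ≤ k`, and `n i = ∑_{j=i-k}^{i-1} n j` for `i > k`)
equals `∑_{j=1}^{U} F_k (i - j + 1) = F_k(i) + F_k(i-1) + ⋯ + F_k(i-U+1)`
for every `i ≥ 1`. -/
theorem multiple_trees_counts_eq_fibonacci
    (k U : ℕ) (hU : 1 ≤ U) (hUk : U ≤ k) (n : ℕ → ℕ)
    (h0 : n 0 = 1)
    (hsmall : ∀ i, 1 ≤ i → i ≤ U → n i = ∑ j ∈ Finset.range i, n j)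
    (hmid : ∀ i, U < i → i ≤ k → n i = ∑ j ∈ Finset.Ico 1 i, n j)
    (hlarge : ∀ i, k < i → n i = ∑ j ∈ Finset.Ico (i - k) i, n j) :
    ∀ i : ℕ, 1 ≤ i → n i = ∑ j ∈ Finset.Icc 1 U, Fk k ((i : ℤ) - (j : ℤ) + 1) := by
  intro i
  induction i using Nat.strong_induction_on with
  | _ i ih =>
    intro hi
    rcases lt_or_ge k i with hik | hik
    · -- case i > k
      rw [hlarge i hik,
        Finset.sum_congr rfl (fun j' hj' => by
          have h := Finset.mem_Ico.mp hj'
          exact ih j' h.2 (by omega)),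
        Finset.sum_comm]
      apply Finset.sum_congr rfl
      intro j hj
      simp only [Finset.mem_Icc] at hj
      rw [sum_shift, Fk_rec k (show (2:ℤ) ≤ (i:ℤ) - j + 1 by omega)]
      have hset : Finset.Icc ((↑(i-k):ℤ) - j + 1) ((i:ℤ) - j)
          = Finset.Icc ((i:ℤ) - j + 1 - k) ((i:ℤ) - j + 1 - 1) := by
        congr 1 <;> omega
      rw [hset]
    · -- case i ≤ k
      have hmidsum : ∑ j' ∈ Finset.Ico 1 i, n j'
          = ∑ j ∈ Finset.Icc 1 U, Sk k ((i:ℤ) - j) := by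
        rw [Finset.sum_congr rfl (fun j' hj' => by
            have h := Finset.mem_Ico.mp hj'
            exact ih j' h.2 h.1),
          Finset.sum_comm]
        apply Finset.sum_congr rfl
        intro j hj
        simp only [Finset.mem_Icc] at hj
        rw [sum_shift]
        exact sum_Icc_Fk k (by omega)
      rcases le_or_gt i U with hiU | hiU
      · -- 1 ≤ i ≤ U
        rw [hsmall i hi hiU, Finset.range_eq_Ico,
          Finset.sum_eq_sum_Ico_succ_bot (by omega), h0, hmidsum]
        have hterm : ∀ j ∈ Finset.Icc 1 U,
            Fk k ((i:ℤ) - j + 1) = Sk k ((i:ℤ) - j) + (if j = i then 1 else 0) := by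
          intro j hj
          simp only [Finset.mem_Icc] at hj
          rcases lt_trichotomy j i with h1 | h1 | h1
          · rw [if_neg (by omega), Fk_rec k (show (2:ℤ) ≤ (i:ℤ) - j + 1 by omega),
              show ((i:ℤ) - j + 1 - 1) = (i:ℤ) - j from by ring,
              sum_Icc_Fk k (by omega), add_zero]
          · subst h1
            rw [if_pos rfl, show ((j:ℤ) - j + 1) = 1 from by ring, Fk_one,
              Sk_nonpos k (by omega)]
          · rw [if_neg (by omega), Fk_nonpos k (by omega), Sk_nonpos k (by omega), add_zero]
        rw [Finset.sum_congr rfl hterm, Finset.sum_add_distrib,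
          Finset.sum_ite_eq' (Finset.Icc 1 U) i (fun _ => 1),
          if_pos (Finset.mem_Icc.mpr ⟨hi, hiU⟩)]
        omega
      · -- U < i ≤ k
        rw [hmid i hiU hik, hmidsum]
        apply Finset.sum_congr rfl
        intro j hj
        simp only [Finset.mem_Icc] at hj
        rw [Fk_rec k (show (2:ℤ) ≤ (i:ℤ) - j + 1 by omega),
          show ((i:ℤ) - j + 1 - 1) = (i:ℤ) - j from by ring]
        exact (sum_Icc_Fk k (by omega)).symm
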